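/- Let S ≥ 1, P ∈ {1,...,S}, σ ≥ 0, ξ ≥ 0, and let u ∈ (ℝ⁺)^S be a nondecreasingly sorted vector. Then for every ℓ ∈ {P,...,S}: if ℓ < S, G̃^P(u)(ℓ) = [max(u(ℓ), min(u(P)+σ, u(ℓ+1))) − ξ]⁺, and G̃^P(u)(S) = [max(u(S), u(P)+σ) − ξ]⁺, where G̃^P(u) = sort([u + σ·e_P − ξ·1]⁺). -/
import Mathlib


open Finset

/-- The nondecreasing rearrangement of a finite real vector. -/
noncomputable def sortVec {S : ℕ} (u : Fin S → ℝ) : Fin S → ℝ := u ∘ Tuple.sort u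

/-- The Schur-convex semi-ordering `≺_c` : equal total sums, and each tail sum
(from the second coordinate on) of the sorted version of `u` is dominated by that of `v`. -/
def schurLE {S : ℕ} (u v : Fin S → ℝ) : Prop :=
  (∑ i, u i = ∑ i, v i) ∧
  ∀ k : Fin S, 1 ≤ (k : ℕ) →
    ∑ i ∈ Finset.Ici k, sortVec u i ≤ ∑ i ∈ Finset.Ici k, sortVec v i

/-- The semi-ordering `≺_*` : every tail sum of `u` is dominated by that of `v`. -/
def starLE {S : ℕ} (u v : Fin S → ℝ) : Prop :=
  ∀ k : Fin S, ∑ i ∈ Finset.Ici k, u i ≤ ∑ i ∈ Finset.Ici k, v i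

/-- The semi-ordering `≺_P` : `u ≺_* v` and `u(ℓ) ≤ v(ℓ)` for every `ℓ ≥ P`. -/
def precP {S : ℕ} (P : Fin S) (u v : Fin S → ℝ) : Prop :=
  starLE u v ∧ ∀ ℓ : Fin S, P ≤ ℓ → u ℓ ≤ v ℓ

/-- The map `G̃^P : u ↦ sort([u + σ·e_P − ξ·1]⁺)`.  For `P` the first index,
this is the Kiefer–Wolfowitz map `G`. -/
noncomputable def GP {S : ℕ} (σ ξ : ℝ) (P : Fin S) (u : Fin S → ℝ) : Fin S → ℝ :=
  sortVec (fun i => max (u i + (if i = P then σ else 0) - ξ) 0)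

/-- explicit formula for the coordinates `ℓ ≥ P` of `G̃^P(u)`. -/
theorem GP_apply_of_ge {S : ℕ} (hS : 0 < S) (P : Fin S) (σ ξ : ℝ)
    (hσ : 0 ≤ σ) (hξ : 0 ≤ ξ)
    (u : Fin S → ℝ) (hu : Monotone u) (hu0 : ∀ i, 0 ≤ u i) :
    ∀ ℓ : Fin S, P ≤ ℓ →
      (∀ h : (ℓ : ℕ) + 1 < S,
          GP σ ξ P u ℓ =
            max (max (u ℓ) (min (u P + σ) (u ⟨(ℓ : ℕ) + 1, h⟩)) - ξ) 0) ∧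
      ((ℓ : ℕ) + 1 = S →
          GP σ ξ P u ℓ = max (max (u ℓ) (u P + σ) - ξ) 0) := by
  classical
  set v : Fin S → ℝ := fun i => max (u i + (if i = P then σ else 0) - ξ) 0 with hvdef
  set f : Fin S → ℝ := fun i => max (u i - ξ) 0 with hfdef
  set c : ℝ := max (u P + σ - ξ) 0 with hcdef
  have hvP : v P = c := by simp [hvdef, hcdef]
  have hvne : ∀ i : Fin S, i ≠ P → v i = f i := by
    intro i hi; simp [hvdef, hfdef, hi]
  have hfm : Monotone f := fun a b hab => max_le_max (by linarith [hu hab]) le_rfl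
  have hfPc : f P ≤ c := max_le_max (by linarith) le_rfl
  -- pivot index m
  have hTne : (Finset.univ.filter (fun ℓ : Fin S => P ≤ ℓ ∧ f ℓ ≤ c)).Nonempty :=
    ⟨P, by simp [hfPc]⟩
  set m : Fin S := (Finset.univ.filter (fun ℓ : Fin S => P ≤ ℓ ∧ f ℓ ≤ c)).max' hTne with hmdef
  have hPm : (P : ℕ) ≤ (m : ℕ) :=
    ((Finset.mem_filter.mp ((Finset.univ.filter _).max'_mem hTne)).2).1
  have hfmc : f m ≤ c := ((Finset.mem_filter.mp ((Finset.univ.filter _).max'_mem hTne)).2).2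
  have hgt : ∀ ℓ : Fin S, (m : ℕ) < (ℓ : ℕ) → c < f ℓ := by
    intro ℓ hℓ
    by_contra hle
    push_neg at hle
    have hmem : ℓ ∈ Finset.univ.filter (fun ℓ : Fin S => P ≤ ℓ ∧ f ℓ ≤ c) :=
      Finset.mem_filter.mpr ⟨Finset.mem_univ _, le_trans (Fin.le_def.mpr hPm) (Fin.le_def.mpr hℓ.le), hle⟩
    exact absurd (Finset.le_max' _ ℓ hmem) (not_le.mpr (Fin.lt_def.mpr hℓ))
  have hmS := m.isLt
  -- the sorting permutation and its inverse
  set π : Fin S → Fin S := fun ℓ =>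
    if (ℓ : ℕ) < (P : ℕ) ∨ (m : ℕ) < (ℓ : ℕ) then ℓ
    else if ℓ = m then P else ⟨min ((ℓ : ℕ) + 1) (S - 1), by omega⟩ with hπdef
  set ρ : Fin S → Fin S := fun ℓ =>
    if (ℓ : ℕ) < (P : ℕ) ∨ (m : ℕ) < (ℓ : ℕ) then ℓ
    else if ℓ = P then m else ⟨(ℓ : ℕ) - 1, by omega⟩ with hρdef
  have hπ1 : ∀ ℓ : Fin S, ((ℓ:ℕ) < (P:ℕ) ∨ (m:ℕ) < (ℓ:ℕ)) → π ℓ = ℓ := by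
    intro ℓ h; simp only [hπdef, if_pos h]
  have hπ2 : π m = P := by
    have h : ¬((m:ℕ) < (P:ℕ) ∨ (m:ℕ) < (m:ℕ)) := by omega
    simp only [hπdef, if_neg h]; simp
  have hπ3 : ∀ ℓ : Fin S, (P:ℕ) ≤ (ℓ:ℕ) → (ℓ:ℕ) < (m:ℕ) → ((π ℓ : Fin S) : ℕ) = (ℓ:ℕ) + 1 := by
    intro ℓ h1 h2
    have h : ¬((ℓ:ℕ) < (P:ℕ) ∨ (m:ℕ) < (ℓ:ℕ)) := by omega
    have h3 : ℓ ≠ m := by intro he; rw [he] at h2; omega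
    simp only [hπdef, if_neg h, if_neg h3]
    simp; omega
  have hρ1 : ∀ ℓ : Fin S, ((ℓ:ℕ) < (P:ℕ) ∨ (m:ℕ) < (ℓ:ℕ)) → ρ ℓ = ℓ := by
    intro ℓ h; simp only [hρdef, if_pos h]
  have hρ2 : ρ P = m := by
    have h : ¬((P:ℕ) < (P:ℕ) ∨ (m:ℕ) < (P:ℕ)) := by omega
    simp only [hρdef, if_neg h]; simp
  have hρ3 : ∀ ℓ : Fin S, (P:ℕ) < (ℓ:ℕ) → (ℓ:ℕ) ≤ (m:ℕ) → ((ρ ℓ : Fin S) : ℕ) = (ℓ:ℕ) - 1 := by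
    intro ℓ h1 h2
    have h : ¬((ℓ:ℕ) < (P:ℕ) ∨ (m:ℕ) < (ℓ:ℕ)) := by omega
    have h3 : ℓ ≠ P := by intro he; rw [he] at h1; omega
    simp only [hρdef, if_neg h, if_neg h3]
  have hL : Function.LeftInverse ρ π := by
    intro ℓ
    have hℓ := ℓ.isLt
    by_cases h1 : (ℓ:ℕ) < (P:ℕ) ∨ (m:ℕ) < (ℓ:ℕ)
    · rw [hπ1 ℓ h1, hρ1 ℓ h1]
    · push_neg at h1
      by_cases h2 : ℓ = m
      · rw [h2, hπ2, hρ2]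
      · have h2' : (ℓ:ℕ) < (m:ℕ) := by
          have : (ℓ:ℕ) ≠ (m:ℕ) := fun h => h2 (Fin.ext h)
          omega
        have hv := hπ3 ℓ h1.1 h2'
        apply Fin.ext
        rw [hρ3 (π ℓ) (by omega) (by omega), hv]
        omega
  have hR : Function.RightInverse ρ π := by
    intro ℓ
    have hℓ := ℓ.isLt
    by_cases h1 : (ℓ:ℕ) < (P:ℕ) ∨ (m:ℕ) < (ℓ:ℕ)
    · rw [hρ1 ℓ h1, hπ1 ℓ h1]
    · push_neg at h1
      by_cases h2 : ℓ = P
      · rw [h2, hρ2, hπ2]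
      · have h2' : (P:ℕ) < (ℓ:ℕ) := by
          have : (ℓ:ℕ) ≠ (P:ℕ) := fun h => h2 (Fin.ext h)
          omega
        have hv := hρ3 ℓ h2' h1.2
        apply Fin.ext
        rw [hπ3 (ρ ℓ) (by omega) (by omega), hv]
        omega
  set e : Equiv.Perm (Fin S) := ⟨π, ρ, hL, hR⟩ with hedef
  have heapp : ∀ ℓ, e ℓ = π ℓ := fun ℓ => rfl
  -- nat-indexed f
  set F : ℕ → ℝ := fun n => f ⟨min n (S - 1), by omega⟩ with hFdef
  have hFm : Monotone F := by
    intro a b hab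
    apply hfm
    simp only [Fin.le_def]; simp; omega
  have hFf : ∀ ℓ : Fin S, F (ℓ : ℕ) = f ℓ := by
    intro ℓ
    have := ℓ.isLt
    simp only [hFdef]
    congr 1
    apply Fin.ext
    simp; omega
  have hFmc : F (m : ℕ) ≤ c := by rw [hFf]; exact hfmc
  have hcF : ∀ n : ℕ, (m : ℕ) < n → n < S → c < F n := by
    intro n h1 h2
    have h3 : F n = f ⟨n, h2⟩ := hFf ⟨n, h2⟩
    rw [h3]
    exact hgt ⟨n, h2⟩ h1
  -- key formula for v ∘ e
  have hkey : ∀ ℓ : Fin S, v (e ℓ) =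
      if (ℓ : ℕ) < (P : ℕ) then F (ℓ : ℕ)
      else if (ℓ : ℕ) < (m : ℕ) then F ((ℓ : ℕ) + 1)
      else if (ℓ : ℕ) = (m : ℕ) then c else F (ℓ : ℕ) := by
    intro ℓ
    have hℓ := ℓ.isLt
    rw [heapp]
    by_cases h1 : (ℓ:ℕ) < (P:ℕ)
    · rw [hπ1 ℓ (Or.inl h1), if_pos h1, hvne ℓ (fun h => by rw [h] at h1; omega), hFf]
    · rw [if_neg h1]
      push_neg at h1
      by_cases h2 : (ℓ:ℕ) < (m:ℕ)
      · rw [if_pos h2]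
        have hv := hπ3 ℓ h1 h2
        rw [hvne (π ℓ) (fun h => by rw [h] at hv; omega), ← hFf (π ℓ), hv]
      · rw [if_neg h2]
        push_neg at h2
        by_cases h3 : (ℓ:ℕ) = (m:ℕ)
        · rw [if_pos h3, Fin.ext h3, hπ2, hvP]
        · rw [if_neg h3]
          have h4 : (m:ℕ) < (ℓ:ℕ) := by omega
          rw [hπ1 ℓ (Or.inr h4), hvne ℓ (fun h => by rw [h] at h4; omega), hFf]
  -- monotonicity of v ∘ e
  have hmono : Monotone (v ∘ e) := by
    intro a b hab
    have hab' : (a:ℕ) ≤ (b:ℕ) := hab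
    have ha := a.isLt; have hb := b.isLt
    simp only [Function.comp_apply, hkey]
    split_ifs with g1 g2 g3 g4 g5 g6 g7 g8 g9 g10 g11 g12 <;>
      first
      | omega
      | exact hFm (by omega)
      | exact le_trans (hFm (by omega : (a:ℕ) ≤ (m:ℕ))) hFmc
      | exact le_trans (hFm (by omega : (a:ℕ) + 1 ≤ (m:ℕ))) hFmc
      | exact le_rfl
      | exact le_of_lt (hcF _ (by omega) (by omega))
      | exact le_trans hFmc (le_of_lt (hcF _ (by omega) (by omega)))
  -- identify with the sort
  have hsort : v ∘ e = v ∘ Tuple.sort v := Tuple.comp_sort_eq_comp_iff_monotone.mpr hmono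
  have hGP : ∀ ℓ : Fin S, GP σ ξ P u ℓ = v (e ℓ) := by
    intro ℓ
    have : GP σ ξ P u ℓ = (v ∘ Tuple.sort v) ℓ := rfl
    rw [this, ← hsort]; rfl
  -- the max-min algebra
  have hg : Monotone (fun t : ℝ => max (t - ξ) 0) := fun a b hab =>
    max_le_max (by linarith) le_rfl
  intro ℓ hPℓ
  have hPℓ' : (P:ℕ) ≤ (ℓ:ℕ) := hPℓ
  have hℓS := ℓ.isLt
  have hGPℓ : GP σ ξ P u ℓ =
      (if (ℓ : ℕ) < (P : ℕ) then F (ℓ : ℕ)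
      else if (ℓ : ℕ) < (m : ℕ) then F ((ℓ : ℕ) + 1)
      else if (ℓ : ℕ) = (m : ℕ) then c else F (ℓ : ℕ)) := by
    rw [hGP ℓ, hkey ℓ]
  rw [if_neg (by omega : ¬ (ℓ : ℕ) < (P : ℕ))] at hGPℓ
  have hfℓm : (ℓ:ℕ) = (m:ℕ) → f ℓ = f m := fun h => by rw [Fin.ext h]
  constructor
  · intro h
    have hR : max (max (u ℓ) (min (u P + σ) (u ⟨(ℓ : ℕ) + 1, h⟩)) - ξ) 0
        = max (f ℓ) (min c (f ⟨(ℓ : ℕ) + 1, h⟩)) := by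
      rw [hg.map_max, hg.map_min]
    have hsucc : f ⟨(ℓ:ℕ)+1, h⟩ = F ((ℓ:ℕ)+1) := (hFf ⟨(ℓ:ℕ)+1, h⟩).symm
    rw [hR]
    by_cases h2 : (ℓ:ℕ) < (m:ℕ)
    · rw [if_pos h2] at hGPℓ
      have hle : f ⟨(ℓ:ℕ)+1, h⟩ ≤ c := by
        rw [hsucc]; exact le_trans (hFm (by omega)) hFmc
      have hle2 : f ℓ ≤ f ⟨(ℓ:ℕ)+1, h⟩ := hfm (by simp [Fin.le_def])
      rw [hGPℓ, min_eq_right hle, max_eq_right hle2, hsucc]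
    · by_cases h3 : (ℓ:ℕ) = (m:ℕ)
      · rw [if_neg h2, if_pos h3] at hGPℓ
        have hlt : c < f ⟨(ℓ:ℕ)+1, h⟩ := hgt _ (by simp; omega)
        rw [hGPℓ, min_eq_left hlt.le, max_eq_right (le_trans (le_of_eq (hfℓm h3)) hfmc)]
      · rw [if_neg h2, if_neg h3] at hGPℓ
        have h4 : (m:ℕ) < (ℓ:ℕ) := by omega
        have hlt : c < f ⟨(ℓ:ℕ)+1, h⟩ := hgt _ (by simp; omega)
        have hlt2 : c < f ℓ := hgt ℓ h4
        rw [hGPℓ, min_eq_left hlt.le, max_eq_left hlt2.le, hFf]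
  · intro h
    have hR : max (max (u ℓ) (u P + σ) - ξ) 0 = max (f ℓ) c := by
      rw [hg.map_max]
    rw [hR]
    have h2 : ¬ (ℓ:ℕ) < (m:ℕ) := by omega
    rw [if_neg h2] at hGPℓ
    by_cases h3 : (ℓ:ℕ) = (m:ℕ)
    · rw [if_pos h3] at hGPℓ
      rw [hGPℓ, max_eq_right (le_trans (le_of_eq (hfℓm h3)) hfmc)]
    · rw [if_neg h3] at hGPℓ
      have hlt2 : c < f ℓ := hgt ℓ (by omega)
      rw [hGPℓ, max_eq_left hlt2.le, hFf]
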